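/- Let S₀^(R) be the set of qubit states (𝟙 + s·σ)/2 with s ∈ R = {s ∈ ℝ³ : |s| ≤ 1, s·n = 0} for a unit vector n. A pair of unbiased qubit observables {A^{a₁}, A^{a₂}} is S₀^(R)-compatible if and only if |P_R(a₁+a₂)| + |P_R(a₁−a₂)| ≤ 2, where P_R is the orthogonal projection of ℝ³ onto the plane {s : s·n = 0}. -/

import Mathlib

open Matrix ComplexOrder

noncomputable def σx : Matrix (Fin 2) (Fin 2) ℂ := !![0, 1; 1, 0]
noncomputable def σy : Matrix (Fin 2) (Fin 2) ℂ := !![0, -Complex.I; Complex.I, 0]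
noncomputable def σz : Matrix (Fin 2) (Fin 2) ℂ := !![1, 0; 0, -1]

/-- `a · σ` for `a ∈ ℝ³`. -/
noncomputable def dotSigma (a : EuclideanSpace ℝ (Fin 3)) : Matrix (Fin 2) (Fin 2) ℂ :=
  (a 0 : ℂ) • σx + (a 1 : ℂ) • σy + (a 2 : ℂ) • σz

/-- The unbiased qubit observable `A^a(±) = (𝟙 ± a·σ)/2`. -/
noncomputable def ubObs (a : EuclideanSpace ℝ (Fin 3)) : Bool → Matrix (Fin 2) (Fin 2) ℂ :=
  fun b => (1/2 : ℂ) • ((1 : Matrix (Fin 2) (Fin 2) ℂ) + (if b then (1:ℂ) else -1) • dotSigma a)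

/-- The qubit state with Bloch vector `s`. -/
noncomputable def qubitState (s : EuclideanSpace ℝ (Fin 3)) : Matrix (Fin 2) (Fin 2) ℂ :=
  (1/2 : ℂ) • ((1 : Matrix (Fin 2) (Fin 2) ℂ) + dotSigma s)

/-- A pair of binary POVMs is compatible if it admits a joint POVM. -/
def PairCompatible (A B : Bool → Matrix (Fin 2) (Fin 2) ℂ) : Prop :=
  ∃ G : Bool → Bool → Matrix (Fin 2) (Fin 2) ℂ,
    (∀ x y, (G x y).PosSemidef) ∧
    (∑ x : Bool, ∑ y : Bool, G x y) = 1 ∧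
    (∀ x, G x true + G x false = A x) ∧
    (∀ y, G true y + G false y = B y)

/-- Orthogonal projection of `ℝ³` onto the plane with unit normal `nv`. -/
noncomputable def projPlane (nv v : EuclideanSpace ℝ (Fin 3)) : EuclideanSpace ℝ (Fin 3) :=
  v - (inner ℝ v nv : ℝ) • nv

/-! ### Auxiliary machinery: Bloch matrices `bm γ v = γ•𝟙 + v·σ` -/

noncomputable def bm (γ : ℝ) (v : EuclideanSpace ℝ (Fin 3)) : Matrix (Fin 2) (Fin 2) ℂ :=
  (γ : ℂ) • 1 + dotSigma v

lemma bm_entries (γ : ℝ) (v : EuclideanSpace ℝ (Fin 3)) :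
    bm γ v = !![((γ:ℂ) + v 2), (v 0 : ℂ) - (v 1 : ℂ) * Complex.I;
                (v 0 : ℂ) + (v 1 : ℂ) * Complex.I, (γ:ℂ) - v 2] := by
  ext i j
  fin_cases i <;> fin_cases j <;>
    simp [bm, dotSigma, σx, σy, σz, Matrix.one_apply] <;> ring

lemma norm_sq3 (v : EuclideanSpace ℝ (Fin 3)) : ‖v‖^2 = v 0^2 + v 1^2 + v 2^2 := by
  rw [EuclideanSpace.norm_eq, Real.sq_sqrt (by positivity)]
  simp [Fin.sum_univ_three, sq_abs]

lemma bm_add (γ δ : ℝ) (v w : EuclideanSpace ℝ (Fin 3)) :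
    bm γ v + bm δ w = bm (γ + δ) (v + w) := by
  ext i j
  fin_cases i <;> fin_cases j <;> simp [bm_entries] <;> push_cast <;> ring

lemma bm_one : bm 1 0 = (1 : Matrix (Fin 2) (Fin 2) ℂ) := by
  ext i j
  fin_cases i <;> fin_cases j <;> simp [bm_entries, Matrix.one_apply]

lemma bm_congr {γ δ : ℝ} {v w : EuclideanSpace ℝ (Fin 3)} (h1 : γ = δ) (h2 : v = w) :
    bm γ v = bm δ w := by rw [h1, h2]

lemma bm_inj {γ δ : ℝ} {v w : EuclideanSpace ℝ (Fin 3)} (h : bm γ v = bm δ w) :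
    γ = δ ∧ v = w := by
  rw [bm_entries, bm_entries] at h
  have h00 := congrFun (congrFun h 0) 0
  have h11 := congrFun (congrFun h 1) 1
  have h01 := congrFun (congrFun h 0) 1
  simp only [Matrix.cons_val', Matrix.cons_val_zero, Matrix.cons_val_one, Matrix.head_cons,
    Matrix.empty_val', Matrix.cons_val_fin_one, Matrix.head_fin_const] at h00 h11 h01
  have e00 := congrArg Complex.re h00
  have e11 := congrArg Complex.re h11
  have e01r := congrArg Complex.re h01
  have e01i := congrArg Complex.im h01
  simp [Complex.ext_iff] at e00 e11 e01r e01i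
  constructor
  · linarith
  · ext i
    fin_cases i <;> simp_all <;> linarith

lemma ubObs_eq (a : EuclideanSpace ℝ (Fin 3)) (x : Bool) :
    ubObs a x = bm (1/2) ((if x then (1/2 : ℝ) else -(1/2)) • a) := by
  cases x <;>
  · ext i j
    fin_cases i <;> fin_cases j <;>
      simp [ubObs, bm_entries, dotSigma, σx, σy, σz, Matrix.one_apply] <;> push_cast <;> ring

lemma qubitState_eq (s : EuclideanSpace ℝ (Fin 3)) :
    qubitState s = bm (1/2) ((1/2 : ℝ) • s) := by
  ext i j
  fin_cases i <;> fin_cases j <;>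
    simp [qubitState, bm_entries, dotSigma, σx, σy, σz, Matrix.one_apply] <;> push_cast <;> ring

lemma inner3 (s v : EuclideanSpace ℝ (Fin 3)) :
    (inner ℝ s v : ℝ) = s 0 * v 0 + s 1 * v 1 + s 2 * v 2 := by
  simp [PiLp.inner_apply, Fin.sum_univ_three, mul_comm]

lemma trace_bm_mul (s : EuclideanSpace ℝ (Fin 3)) (γ : ℝ) (v : EuclideanSpace ℝ (Fin 3)) :
    (qubitState s * bm γ v).trace = ((γ + (inner ℝ s v : ℝ) : ℝ) : ℂ) := by
  rw [qubitState_eq, bm_entries, bm_entries, inner3]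
  rw [Matrix.trace_fin_two]
  simp [Matrix.mul_apply, Fin.sum_univ_two, Complex.ext_iff]
  constructor <;> push_cast <;> ring

lemma bm_hermitian (γ : ℝ) (v : EuclideanSpace ℝ (Fin 3)) : (bm γ v).IsHermitian := by
  rw [bm_entries]
  ext i j
  fin_cases i <;> fin_cases j <;> simp [Matrix.conjTranspose_apply, Complex.ext_iff]

lemma bm_psd {γ : ℝ} {v : EuclideanSpace ℝ (Fin 3)} (h : ‖v‖ ≤ γ) : (bm γ v).PosSemidef := by
  have hγ : 0 ≤ γ := le_trans (norm_nonneg v) h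
  have hsq : v 0^2 + v 1^2 + v 2^2 ≤ γ^2 := by
    rw [← norm_sq3]; exact pow_le_pow_left₀ (norm_nonneg v) h 2
  refine Matrix.PosSemidef.of_dotProduct_mulVec_nonneg (bm_hermitian γ v) fun x => ?_
  rw [bm_entries]
  rw [Complex.le_def]
  set p := (x 0).re; set q := (x 0).im; set r := (x 1).re; set t := (x 1).im
  constructor
  · simp only [dotProduct, mulVec, Fin.sum_univ_two, Pi.star_apply, RCLike.star_def]
    simp [Complex.add_re, Complex.mul_re, Complex.mul_im, Matrix.cons_val_zero,
      Matrix.cons_val_one, Matrix.head_cons]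
    ring_nf
    have habs : |v 2| ≤ γ := by nlinarith [sq_abs (v 2), abs_nonneg (v 2)]
    have h2a : 0 ≤ γ + v 2 := by cases abs_le.mp habs; linarith
    have h2b : 0 ≤ γ - v 2 := by cases abs_le.mp habs; linarith
    by_cases hc : γ + v 2 = 0
    · have hv0 : v 0 = 0 := by nlinarith
      have hv1 : v 1 = 0 := by nlinarith
      have hv2 : v 2 = -γ := by linarith
      rw [hv0, hv1, hv2]
      nlinarith [sq_nonneg p, sq_nonneg q, sq_nonneg r, sq_nonneg t]
    · have hc' : 0 < γ + v 2 := lt_of_le_of_ne h2a (Ne.symm hc)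
      nlinarith [sq_nonneg ((γ + v 2)*p + v 0*r + v 1*t), sq_nonneg ((γ + v 2)*q + v 0*t - v 1*r),
        mul_nonneg (sub_nonneg.2 hsq) (add_nonneg (sq_nonneg r) (sq_nonneg t)), hc',
        mul_pos hc' hc']
  · simp only [dotProduct, mulVec, Fin.sum_univ_two, Pi.star_apply, RCLike.star_def]
    simp [Complex.add_im, Complex.mul_re, Complex.mul_im]
    ring

lemma bm_psd' {γ : ℝ} {v : EuclideanSpace ℝ (Fin 3)} (h : (bm γ v).PosSemidef) : ‖v‖ ≤ γ := by
  have key : ∀ x : Fin 2 → ℂ, 0 ≤ (dotProduct (star x) ((bm γ v) *ᵥ x)).re := fun x =>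
    (Complex.le_def.mp (h.dotProduct_mulVec_nonneg x)).1
  have h0 := key ![1, 0]
  have h1 := key ![0, 1]
  rw [bm_entries] at h0 h1
  simp [dotProduct, mulVec, Fin.sum_univ_two] at h0 h1
  have hq : ∀ T : ℝ, 0 ≤ (γ - v 2) * (T * T) + (2 * (v 0^2 + v 1^2)) * T
      + (γ + v 2) * (v 0^2 + v 1^2) := by
    intro T
    have := key ![(v 0 : ℂ) - (v 1 : ℂ) * Complex.I, (T : ℂ)]
    rw [bm_entries] at this
    simp [dotProduct, mulVec, Fin.sum_univ_two, Complex.add_re, Complex.mul_re,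
      Complex.mul_im] at this
    nlinarith [this]
  have hd := discrim_le_zero hq
  rw [discrim] at hd
  have hγ : 0 ≤ γ := by nlinarith
  have hu : v 0^2 + v 1^2 + v 2^2 ≤ γ^2 := by
    rcases eq_or_lt_of_le (by positivity : (0:ℝ) ≤ v 0^2 + v 1^2) with he | hlt
    · nlinarith
    · nlinarith
  have : ‖v‖^2 ≤ γ^2 := by rw [norm_sq3]; exact hu
  nlinarith [norm_nonneg v]

lemma herm_decomp {M : Matrix (Fin 2) (Fin 2) ℂ} (h : M.IsHermitian) :
    ∃ γ v, M = bm γ v := by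
  refine ⟨((M 0 0).re + (M 1 1).re)/2,
    (WithLp.toLp 2 (fun i => (![(M 0 1).re, -(M 0 1).im, ((M 0 0).re - (M 1 1).re)/2] i)) :
      EuclideanSpace ℝ (Fin 3)), ?_⟩
  have h00 : M 0 0 = star (M 0 0) := (congrFun (congrFun h.symm 0) 0)
  have h11 : M 1 1 = star (M 1 1) := (congrFun (congrFun h.symm 1) 1)
  have h10 : M 1 0 = star (M 0 1) := (congrFun (congrFun h.symm 1) 0)
  have i00 : (M 0 0).im = 0 := by
    have := congrArg Complex.im h00; simp at this; linarith
  have i11 : (M 1 1).im = 0 := by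
    have := congrArg Complex.im h11; simp at this; linarith
  rw [bm_entries]
  ext i j
  fin_cases i <;> fin_cases j <;>
    simp [Complex.ext_iff, h10, i00, i11] <;> ring

/-! ### Plane lemmas -/

variable {nv w : EuclideanSpace ℝ (Fin 3)}

lemma projPlane_inner (hn : ‖nv‖ = 1) (w : EuclideanSpace ℝ (Fin 3)) :
    (inner ℝ (projPlane nv w) nv : ℝ) = 0 := by
  have hnn : (inner ℝ nv nv : ℝ) = 1 := by
    rw [real_inner_self_eq_norm_sq, hn]; norm_num
  rw [projPlane, inner_sub_left, real_inner_smul_left, hnn]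
  ring

lemma inner_projPlane_self (hn : ‖nv‖ = 1) (w : EuclideanSpace ℝ (Fin 3)) :
    (inner ℝ (projPlane nv w) w : ℝ) = ‖projPlane nv w‖^2 := by
  have : (inner ℝ (projPlane nv w) (projPlane nv w) : ℝ) = inner ℝ (projPlane nv w) w
      - (inner ℝ w nv : ℝ) * inner ℝ (projPlane nv w) nv := by
    rw [projPlane, inner_sub_right, real_inner_smul_right]
  rw [projPlane_inner hn] at this
  rw [← real_inner_self_eq_norm_sq]
  linarith

lemma norm_projPlane_le (hn : ‖nv‖ = 1) (w : EuclideanSpace ℝ (Fin 3)) :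
    ‖projPlane nv w‖ ≤ ‖w‖ := by
  have h := inner_projPlane_self hn w
  have hcs := real_inner_le_norm (projPlane nv w) w
  rcases eq_or_lt_of_le (norm_nonneg (projPlane nv w)) with h0 | h0
  · rw [← h0]; exact norm_nonneg w
  · nlinarith

lemma projPlane_add (nv x y : EuclideanSpace ℝ (Fin 3)) :
    projPlane nv (x + y) = projPlane nv x + projPlane nv y := by
  simp only [projPlane, inner_add_left]
  module

lemma projPlane_smul (nv x : EuclideanSpace ℝ (Fin 3)) (c : ℝ) :
    projPlane nv (c • x) = c • projPlane nv x := by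
  simp only [projPlane, inner_smul_left, RCLike.conj_to_real]
  module

lemma projPlane_sub (nv x y : EuclideanSpace ℝ (Fin 3)) :
    projPlane nv (x - y) = projPlane nv x - projPlane nv y := by
  simp only [projPlane, inner_sub_left]
  module

lemma projPlane_zero (nv : EuclideanSpace ℝ (Fin 3)) : projPlane nv 0 = 0 := by
  simp [projPlane]

lemma projPlane_eq_zero (hn : ‖nv‖ = 1)
    (h : ∀ s : EuclideanSpace ℝ (Fin 3), ‖s‖ ≤ 1 → (inner ℝ s nv : ℝ) = 0 → (inner ℝ s w : ℝ) = 0) :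
    projPlane nv w = 0 := by
  by_contra hne
  have hpn : 0 < ‖projPlane nv w‖ := norm_pos_iff.mpr hne
  have hs := h (‖projPlane nv w‖⁻¹ • projPlane nv w) ?_ ?_
  · rw [real_inner_smul_left, inner_projPlane_self hn w] at hs
    have he : ‖projPlane nv w‖⁻¹ * ‖projPlane nv w‖^2 = ‖projPlane nv w‖ := by
      field_simp [pow_two]
    rw [he] at hs
    exact absurd hs (ne_of_gt hpn)
  · rw [norm_smul, norm_inv, Real.norm_eq_abs, abs_norm, inv_mul_cancel₀ (ne_of_gt hpn)]
  · rw [real_inner_smul_left, projPlane_inner hn w, mul_zero]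

lemma match_proj (hn : ‖nv‖ = 1) {w u : EuclideanSpace ℝ (Fin 3)}
    (h : ∀ s : EuclideanSpace ℝ (Fin 3), ‖s‖ ≤ 1 → (inner ℝ s nv : ℝ) = 0 →
      (inner ℝ s w : ℝ) = inner ℝ s u) :
    projPlane nv w = projPlane nv u := by
  have h0 : projPlane nv (w - u) = 0 := by
    refine projPlane_eq_zero hn fun s h1 h2 => ?_
    rw [inner_sub_right, h s h1 h2]; ring
  rw [projPlane_sub] at h0
  exact sub_eq_zero.mp h0

lemma inner_projPlane_of_perp {s : EuclideanSpace ℝ (Fin 3)} (hsn : (inner ℝ s nv : ℝ) = 0)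
    (w : EuclideanSpace ℝ (Fin 3)) :
    (inner ℝ s (projPlane nv w) : ℝ) = inner ℝ s w := by
  rw [projPlane, inner_sub_right, real_inner_smul_right, hsn]
  ring

/-- The pair `{A^{a₁}, A^{a₂}}` of unbiased qubit observables is `S₀^(R)`-compatible
(for the disk `R` of Bloch vectors orthogonal to the unit vector `nv`) iff
`|P_R(a₁+a₂)| + |P_R(a₁−a₂)| ≤ 2`. -/
theorem stmt5 (nv a₁ a₂ : EuclideanSpace ℝ (Fin 3)) (hn : ‖nv‖ = 1)
    (h₁ : ‖a₁‖ ≤ 1) (h₂ : ‖a₂‖ ≤ 1) :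
    (∃ B₁ B₂ : Bool → Matrix (Fin 2) (Fin 2) ℂ, PairCompatible B₁ B₂ ∧
      ∀ s : EuclideanSpace ℝ (Fin 3), ‖s‖ ≤ 1 → (inner ℝ s nv : ℝ) = 0 →
        (∀ x, (qubitState s * B₁ x).trace = (qubitState s * ubObs a₁ x).trace) ∧
        (∀ x, (qubitState s * B₂ x).trace = (qubitState s * ubObs a₂ x).trace))
    ↔ ‖projPlane nv (a₁ + a₂)‖ + ‖projPlane nv (a₁ - a₂)‖ ≤ 2 := by
  constructor
  · rintro ⟨B₁, B₂, ⟨G, hpsd, hsum, hm1, hm2⟩, htr⟩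
    choose γ g hG using fun x y => herm_decomp (hpsd x y).1
    have hng : ∀ x y, ‖g x y‖ ≤ γ x y := fun x y => bm_psd' (by rw [← hG x y]; exact hpsd x y)
    -- total sum
    have hsum2 : (G true true + G true false) + (G false true + G false false) = 1 := by
      simpa [Fintype.sum_bool] using hsum
    rw [hG, hG, hG, hG, bm_add, bm_add, bm_add, ← bm_one] at hsum2
    obtain ⟨hγs, hgs⟩ := bm_inj hsum2
    -- trace conditions
    have tr1 : ∀ s : EuclideanSpace ℝ (Fin 3), ‖s‖ ≤ 1 → (inner ℝ s nv : ℝ) = 0 →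
        (γ true true + γ true false) + (inner ℝ s (g true true + g true false) : ℝ)
          = 1/2 + (inner ℝ s ((1/2 : ℝ) • a₁) : ℝ) := by
      intro s h1 h2
      have := (htr s h1 h2).1 true
      rw [← hm1 true, hG, hG, bm_add, ubObs_eq, trace_bm_mul, trace_bm_mul] at this
      exact_mod_cast this
    have tr2 : ∀ s : EuclideanSpace ℝ (Fin 3), ‖s‖ ≤ 1 → (inner ℝ s nv : ℝ) = 0 →
        (γ true true + γ false true) + (inner ℝ s (g true true + g false true) : ℝ)
          = 1/2 + (inner ℝ s ((1/2 : ℝ) • a₂) : ℝ) := by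
      intro s h1 h2
      have := (htr s h1 h2).2 true
      rw [← hm2 true, hG, hG, bm_add, ubObs_eq, trace_bm_mul, trace_bm_mul] at this
      exact_mod_cast this
    -- constants
    have c1 : γ true true + γ true false = 1/2 := by
      have := tr1 0 (by simp) (by simp)
      simpa using this
    have c2 : γ true true + γ false true = 1/2 := by
      have := tr2 0 (by simp) (by simp)
      simpa using this
    -- projected identities
    have hP1 : projPlane nv (g true true + g true false) = projPlane nv ((1/2 : ℝ) • a₁) := by
      refine match_proj hn fun s h1 h2 => ?_
      have := tr1 s h1 h2
      rw [c1] at this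
      linarith
    have hP2 : projPlane nv (g true true + g false true) = projPlane nv ((1/2 : ℝ) • a₂) := by
      refine match_proj hn fun s h1 h2 => ?_
      have := tr2 s h1 h2
      rw [c2] at this
      linarith
    rw [projPlane_add, projPlane_smul] at hP1 hP2
    have hPs : projPlane nv (g true true) + projPlane nv (g true false)
        + projPlane nv (g false true) + projPlane nv (g false false) = 0 := by
      have := congrArg (projPlane nv) hgs
      rw [projPlane_add, projPlane_add, projPlane_add, projPlane_zero] at this
      rw [← this]; abel
    set Ptt := projPlane nv (g true true)
    set Ptf := projPlane nv (g true false)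
    set Pft := projPlane nv (g false true)
    set Pff := projPlane nv (g false false)
    have ha₁ : projPlane nv a₁ = (2:ℝ) • (Ptt + Ptf) := by
      rw [hP1, smul_smul]; norm_num
    have ha₂ : projPlane nv a₂ = (2:ℝ) • (Ptt + Pft) := by
      rw [hP2, smul_smul]; norm_num
    have hff : Pff = -(Ptt + Ptf + Pft) := eq_neg_of_add_eq_zero_right hPs
    have key1 : projPlane nv (a₁ + a₂) = (2:ℝ) • Ptt - (2:ℝ) • Pff := by
      rw [projPlane_add, ha₁, ha₂, hff]; module
    have key2 : projPlane nv (a₁ - a₂) = (2:ℝ) • Ptf - (2:ℝ) • Pft := by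
      rw [projPlane_sub, ha₁, ha₂]; module
    have bnd : ∀ x y, ‖projPlane nv (g x y)‖ ≤ γ x y := fun x y =>
      le_trans (norm_projPlane_le hn _) (hng x y)
    have n1 : ‖projPlane nv (a₁ + a₂)‖ ≤ 2 * γ true true + 2 * γ false false := by
      rw [key1]
      calc ‖(2:ℝ) • Ptt - (2:ℝ) • Pff‖ ≤ ‖(2:ℝ) • Ptt‖ + ‖(2:ℝ) • Pff‖ := norm_sub_le _ _
        _ = 2 * ‖Ptt‖ + 2 * ‖Pff‖ := by rw [norm_smul, norm_smul]; simp
        _ ≤ 2 * γ true true + 2 * γ false false := by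
            have := bnd true true; have := bnd false false; linarith [bnd true true, bnd false false]
    have n2 : ‖projPlane nv (a₁ - a₂)‖ ≤ 2 * γ true false + 2 * γ false true := by
      rw [key2]
      calc ‖(2:ℝ) • Ptf - (2:ℝ) • Pft‖ ≤ ‖(2:ℝ) • Ptf‖ + ‖(2:ℝ) • Pft‖ := norm_sub_le _ _
        _ = 2 * ‖Ptf‖ + 2 * ‖Pft‖ := by rw [norm_smul, norm_smul]; simp
        _ ≤ 2 * γ true false + 2 * γ false true := by
            linarith [bnd true false, bnd false true]
    linarith
  · intro hineq
    set b₁ := projPlane nv a₁ with hb₁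
    set b₂ := projPlane nv a₂ with hb₂
    set z : ℝ := (‖b₁ + b₂‖ - ‖b₁ - b₂‖)/2 with hz
    refine ⟨ubObs b₁, ubObs b₂,
      ⟨fun x y => bm ((1 + (if x then (1:ℝ) else -1) * (if y then (1:ℝ) else -1) * z)/4)
          ((if x then (1/4 : ℝ) else -(1/4)) • b₁ + (if y then (1/4 : ℝ) else -(1/4)) • b₂),
        ?_, ?_, ?_, ?_⟩, ?_⟩
    · intro x y
      apply bm_psd
      have hnn1 : 0 ≤ ‖b₁ + b₂‖ := norm_nonneg _
      have hnn2 : 0 ≤ ‖b₁ - b₂‖ := norm_nonneg _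
      have hineq' : ‖b₁ + b₂‖ + ‖b₁ - b₂‖ ≤ 2 := by
        rw [projPlane_add, projPlane_sub, ← hb₁, ← hb₂] at hineq
        exact hineq
      cases x <;> cases y <;> simp only [Bool.false_eq_true, if_false, eq_self_iff_true, if_true]
      · have e : (-(1/4) : ℝ) • b₁ + (-(1/4) : ℝ) • b₂ = (-(1/4) : ℝ) • (b₁ + b₂) := by module
        rw [e, norm_smul]
        simp only [Real.norm_eq_abs]
        rw [abs_of_nonpos (by norm_num : (-(1/4) : ℝ) ≤ 0)]
        rw [hz]; linarith
      · have e : (-(1/4) : ℝ) • b₁ + (1/4 : ℝ) • b₂ = (-(1/4) : ℝ) • (b₁ - b₂) := by module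
        rw [e, norm_smul]
        simp only [Real.norm_eq_abs]
        rw [abs_of_nonpos (by norm_num : (-(1/4) : ℝ) ≤ 0)]
        rw [hz]; linarith
      · have e : ((1/4) : ℝ) • b₁ + (-(1/4) : ℝ) • b₂ = ((1/4) : ℝ) • (b₁ - b₂) := by module
        rw [e, norm_smul]
        simp only [Real.norm_eq_abs]
        rw [abs_of_nonneg (by norm_num : (0:ℝ) ≤ 1/4)]
        rw [hz]; linarith
      · have e : ((1/4) : ℝ) • b₁ + ((1/4) : ℝ) • b₂ = ((1/4) : ℝ) • (b₁ + b₂) := by module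
        rw [e, norm_smul]
        simp only [Real.norm_eq_abs]
        rw [abs_of_nonneg (by norm_num : (0:ℝ) ≤ 1/4)]
        rw [hz]; linarith
    · rw [Fintype.sum_bool]
      rw [Fintype.sum_bool, Fintype.sum_bool]
      simp only [Bool.false_eq_true, if_false, eq_self_iff_true, if_true]
      rw [bm_add, bm_add, bm_add, ← bm_one]
      exact bm_congr (by ring) (by module)
    · intro x
      rw [bm_add, ubObs_eq]
      cases x <;> simp only [Bool.false_eq_true, if_false, eq_self_iff_true, if_true] <;>
        exact bm_congr (by ring) (by module)
    · intro y
      rw [bm_add, ubObs_eq]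
      cases y <;> simp only [Bool.false_eq_true, if_false, eq_self_iff_true, if_true] <;>
        exact bm_congr (by ring) (by module)
    · intro s h1 h2
      constructor <;> intro x <;>
        rw [ubObs_eq, ubObs_eq, trace_bm_mul, trace_bm_mul, inner_smul_right, inner_smul_right]
      · rw [hb₁, inner_projPlane_of_perp h2]
      · rw [hb₂, inner_projPlane_of_perp h2]
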